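/- Under the hypotheses of Lemma 1 with the additional condition g̈ ⋆ g − α·(ḧ ⋆ h) = αβ·δ for some real β (δ the Kronecker delta sequence at 0), one has D̃(z, x) − ‖z‖² = αβ‖x‖² + α(D(y, x) − ‖y‖²) for every finitely supported x. Consequently, if all candidate inputs x have the same energy ‖x‖², then for fixed y (and z = f ⋆ y), a sequence x minimizes D̃(z, x) over the candidate set if and only if it minimizes D(y, x). -/

import Mathlib

open scoped ComplexConjugate

noncomputable def conv (a b : ℤ → ℂ) : ℤ → ℂ := fun n => ∑' m, a m * b (n - m)

noncomputable def ddot (a : ℤ → ℂ) : ℤ → ℂ := fun n => conj (a (-n))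

def HasFinSupp (a : ℤ → ℂ) : Prop := (Function.support a).Finite

/-- Energy `‖u‖² = Σ_n |u_n|²`. -/
noncomputable def energy (u : ℤ → ℂ) : ℝ := ∑' n, Complex.normSq (u n)

/-- `D(y,x) = ‖y − h ⋆ x‖²`. -/
noncomputable def Dcost (h y x : ℤ → ℂ) : ℝ :=
  ∑' n, Complex.normSq (y n - conv h x n)

open Pointwise

lemma summable_fin {ι M : Type*} [AddCommGroup M] [TopologicalSpace M] [IsTopologicalAddGroup M]
    {F : ι → M} {s : Set ι} (hs : s.Finite) (h : ∀ n, F n ≠ 0 → n ∈ s) : Summable F := by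
  classical
  refine summable_of_ne_finset_zero (s := hs.toFinset) ?_
  intro n hn
  by_contra h0
  exact hn (hs.mem_toFinset.2 (h n h0))

lemma conv_supp (a b : ℤ → ℂ) {n : ℤ} (hn : conv a b n ≠ 0) :
    n ∈ Function.support a + Function.support b := by
  by_contra hmem
  apply hn
  have h0 : ∀ m : ℤ, a m * b (n - m) = 0 := by
    intro m
    by_contra hm
    exact hmem (Set.mem_add.2 ⟨m, left_ne_zero_of_mul hm, n - m, right_ne_zero_of_mul hm, by ring⟩)
  simp [conv, h0]

lemma conv_fin {a b : ℤ → ℂ} (ha : HasFinSupp a) (hb : HasFinSupp b) : HasFinSupp (conv a b) :=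
  (ha.add hb).subset fun _ hn => conv_supp a b hn

lemma ddot_fin {a : ℤ → ℂ} (ha : HasFinSupp a) : HasFinSupp (ddot a) := by
  refine (ha.image Neg.neg).subset ?_
  intro n hn
  have : a (-n) ≠ 0 := by
    intro h0; apply hn; simp [ddot, h0]
  exact ⟨-n, this, by ring⟩

def eAdj : ℤ × ℤ ≃ ℤ × ℤ where
  toFun p := (p.1 - p.2, -p.2)
  invFun p := (p.1 - p.2, -p.2)
  left_inv p := by simp [Prod.ext_iff]
  right_inv p := by simp [Prod.ext_iff]

lemma adj (a u v : ℤ → ℂ) (ha : HasFinSupp a) (hu : HasFinSupp u) (hv : HasFinSupp v) :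
    ∑' n, conj (u n) * conv a v n = ∑' n, conj (conv (ddot a) u n) * v n := by
  have hG : Summable (fun p : ℤ × ℤ => conj (u p.1) * (a p.2 * v (p.1 - p.2))) := by
    refine summable_fin (hu.prod ha) ?_
    intro p hp
    refine Set.mem_prod.2 ⟨?_, ?_⟩
    · have := left_ne_zero_of_mul hp
      simpa using this
    · exact left_ne_zero_of_mul (right_ne_zero_of_mul hp)
  have hGin : ∀ n : ℤ, Summable (fun m => conj (u n) * (a m * v (n - m))) := by
    intro n
    refine summable_fin ha ?_
    intro m hm
    exact left_ne_zero_of_mul (right_ne_zero_of_mul hm)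
  have hH : Summable (fun q : ℤ × ℤ => conj (u (q.1 - q.2)) * (a (-q.2) * v q.1)) := by
    refine summable_fin (hv.prod (ha.image Neg.neg)) ?_
    intro q hq
    refine Set.mem_prod.2 ⟨?_, ?_⟩
    · exact right_ne_zero_of_mul (right_ne_zero_of_mul hq)
    · exact ⟨-q.2, left_ne_zero_of_mul (right_ne_zero_of_mul hq), by ring⟩
  have hHin : ∀ k : ℤ, Summable (fun m => conj (u (k - m)) * (a (-m) * v k)) := by
    intro k
    refine summable_fin (ha.image Neg.neg) ?_
    intro m hm
    exact ⟨-m, left_ne_zero_of_mul (right_ne_zero_of_mul hm), by ring⟩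
  have hconj : ∀ k : ℤ, conj (conv (ddot a) u k) = ∑' m, a (-m) * conj (u (k - m)) := by
    intro k
    simp only [conv, starRingEnd_apply]
    rw [tsum_star]
    congr 1; funext m
    simp only [ddot, star_mul', starRingEnd_apply, star_star]
  have harg : ∀ q : ℤ × ℤ, q.1 - q.2 - -q.2 = q.1 := fun q => by ring
  calc ∑' n, conj (u n) * conv a v n
      = ∑' n, ∑' m, conj (u n) * (a m * v (n - m)) := by
        congr 1; funext n
        simp only [conv]
        exact tsum_mul_left.symm
    _ = ∑' p : ℤ × ℤ, conj (u p.1) * (a p.2 * v (p.1 - p.2)) := (Summable.tsum_prod' hG hGin).symm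
    _ = ∑' q : ℤ × ℤ, conj (u (q.1 - q.2)) * (a (-q.2) * v q.1) := by
        rw [← Equiv.tsum_eq eAdj (fun p : ℤ × ℤ => conj (u p.1) * (a p.2 * v (p.1 - p.2)))]
        congr 1; funext q
        simp only [eAdj, Equiv.coe_fn_mk, harg]
    _ = ∑' k, ∑' m, conj (u (k - m)) * (a (-m) * v k) := Summable.tsum_prod' hH hHin
    _ = ∑' n, conj (conv (ddot a) u n) * v n := by
        congr 1; funext k
        rw [hconj k, ← tsum_mul_right]
        congr 1; funext m; ring

def eAsc : ℤ × ℤ ≃ ℤ × ℤ where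
  toFun q := (q.1 + q.2, q.1)
  invFun p := (p.2, p.1 - p.2)
  left_inv p := by simp [Prod.ext_iff]
  right_inv p := by simp [Prod.ext_iff]

lemma conv_assoc (a b c : ℤ → ℂ) (ha : HasFinSupp a) (hb : HasFinSupp b) (_hc : HasFinSupp c) :
    conv (conv a b) c = conv a (conv b c) := by
  funext n
  have hF : Summable (fun p : ℤ × ℤ => a p.2 * b (p.1 - p.2) * c (n - p.1)) := by
    refine summable_fin ((ha.add hb).prod ha) ?_
    intro p hp
    refine Set.mem_prod.2 ⟨?_, left_ne_zero_of_mul (left_ne_zero_of_mul hp)⟩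
    exact Set.mem_add.2 ⟨p.2, left_ne_zero_of_mul (left_ne_zero_of_mul hp),
      p.1 - p.2, right_ne_zero_of_mul (left_ne_zero_of_mul hp), by ring⟩
  have hFin : ∀ m : ℤ, Summable (fun j => a j * b (m - j) * c (n - m)) := by
    intro m
    refine summable_fin ha ?_
    intro j hj
    exact left_ne_zero_of_mul (left_ne_zero_of_mul hj)
  have hG : Summable (fun q : ℤ × ℤ => a q.1 * (b q.2 * c (n - q.1 - q.2))) := by
    refine summable_fin (ha.prod hb) ?_
    intro q hq
    exact Set.mem_prod.2 ⟨left_ne_zero_of_mul hq,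
      left_ne_zero_of_mul (right_ne_zero_of_mul hq)⟩
  have hGin : ∀ j : ℤ, Summable (fun i => a j * (b i * c (n - j - i))) := by
    intro j
    refine summable_fin hb ?_
    intro i hi
    exact left_ne_zero_of_mul (right_ne_zero_of_mul hi)
  calc conv (conv a b) c n
      = ∑' m, ∑' j, a j * b (m - j) * c (n - m) := by
        simp only [conv]
        congr 1; funext m
        exact tsum_mul_right.symm
    _ = ∑' p : ℤ × ℤ, a p.2 * b (p.1 - p.2) * c (n - p.1) := (Summable.tsum_prod' hF hFin).symm
    _ = ∑' q : ℤ × ℤ, a q.1 * (b q.2 * c (n - q.1 - q.2)) := by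
        rw [← Equiv.tsum_eq eAsc (fun p : ℤ × ℤ => a p.2 * b (p.1 - p.2) * c (n - p.1))]
        congr 1; funext q
        have h1 : q.1 + q.2 - q.1 = q.2 := by ring
        have h2 : n - (q.1 + q.2) = n - q.1 - q.2 := by ring
        simp only [eAsc, Equiv.coe_fn_mk, h1, h2]
        ring
    _ = ∑' j, ∑' i, a j * (b i * c (n - j - i)) := Summable.tsum_prod' hG hGin
    _ = conv a (conv b c) n := by
        simp only [conv]
        congr 1; funext j
        exact tsum_mul_left

lemma conv_smul_left (c : ℂ) (a b : ℤ → ℂ) (n : ℤ) :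
    conv (fun k => c * a k) b n = c * conv a b n := by
  simp only [conv, mul_assoc]
  exact tsum_mul_left

lemma conv_add_left (a b c : ℤ → ℂ) (ha : HasFinSupp a) (hb : HasFinSupp b) (n : ℤ) :
    conv (fun k => a k + b k) c n = conv a c n + conv b c n := by
  simp only [conv, add_mul]
  refine Summable.tsum_add ?_ ?_
  · exact summable_fin ha fun m hm => left_ne_zero_of_mul hm
  · exact summable_fin hb fun m hm => left_ne_zero_of_mul hm

lemma conv_delta (x : ℤ → ℂ) (n : ℤ) :
    conv (fun k => if k = 0 then 1 else 0) x n = x n := by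
  have h0 : ∀ m : ℤ, (if m = 0 then (1:ℂ) else 0) * x (n - m) = if m = 0 then x n else 0 := by
    intro m; by_cases hm : m = 0 <;> simp [hm]
  simp only [conv, h0]
  exact tsum_ite_eq 0 (fun _ => x n)

lemma hfs_mul_conj_left {u G : ℤ → ℂ} (hu : HasFinSupp u) :
    Summable (fun n => conj (u n) * G n) := by
  refine summable_fin hu ?_
  intro n hn
  have := left_ne_zero_of_mul hn
  simpa using this

lemma hfs_mul_right {F x : ℤ → ℂ} (hx : HasFinSupp x) :
    Summable (fun n => F n * x n) :=
  summable_fin hx fun n hn => right_ne_zero_of_mul hn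

lemma dexp (u w : ℤ → ℂ) (hu : HasFinSupp u) (hw : HasFinSupp w) :
    ∑' n, Complex.normSq (u n - w n)
      = (∑' n, Complex.normSq (u n)) - 2 * (∑' n, conj (u n) * w n).re
        + ∑' n, Complex.normSq (w n) := by
  have hsu : Summable fun n => Complex.normSq (u n) := by
    refine summable_fin hu ?_
    intro n hn
    simp only [Function.mem_support]
    intro h0; exact hn (by simp [h0])
  have hsw : Summable fun n => Complex.normSq (w n) := by
    refine summable_fin hw ?_
    intro n hn
    simp only [Function.mem_support]
    intro h0; exact hn (by simp [h0])
  have hcx : Summable fun n => conj (u n) * w n := hfs_mul_conj_left hu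
  have hcr : Summable fun n => (u n * conj (w n)).re := by
    refine summable_fin hu ?_
    intro n hn
    simp only [Function.mem_support]
    intro h0; exact hn (by simp [h0])
  have hre : (∑' n, conj (u n) * w n).re = ∑' n, (u n * conj (w n)).re := by
    rw [Complex.re_tsum hcx]
    congr 1; funext n
    have h1 : conj (u n) * w n = conj (u n * conj (w n)) := by
      rw [map_mul, Complex.conj_conj]
    rw [h1, Complex.conj_re]
  calc ∑' n, Complex.normSq (u n - w n)
      = ∑' n, (Complex.normSq (u n) + Complex.normSq (w n) - 2 * (u n * conj (w n)).re) := by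
        congr 1; funext n; rw [Complex.normSq_sub]
    _ = (∑' n, (Complex.normSq (u n) + Complex.normSq (w n)))
          - ∑' n, 2 * (u n * conj (w n)).re := Summable.tsum_sub (hsu.add hsw) (hcr.mul_left 2)
    _ = (∑' n, Complex.normSq (u n)) - 2 * (∑' n, conj (u n) * w n).re
          + ∑' n, Complex.normSq (w n) := by
        rw [Summable.tsum_add hsu hsw, tsum_mul_left, hre]; ring

lemma energy_eq_re (u : ℤ → ℂ) (hu : HasFinSupp u) :
    energy u = (∑' n, conj (u n) * u n).re := by
  rw [Complex.re_tsum (hfs_mul_conj_left hu)]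
  unfold energy
  congr 1; funext n
  simp [Complex.normSq_apply, Complex.mul_re]

/-- Under the hypotheses of Lemma 1 together with
`g̈ ⋆ g − α (ḧ ⋆ h) = αβ δ`, one has
`D̃(z,x) − ‖z‖² = αβ‖x‖² + α(D(y,x) − ‖y‖²)` for all finitely supported `x`;
consequently, over any finite candidate set of equal-energy inputs,
`x` minimizes `D̃(z,·)` iff it minimizes `D(y,·)`. -/
theorem equal_energy_equivalence (h f g y : ℤ → ℂ)
    (hh : HasFinSupp h) (hf : HasFinSupp f) (hg : HasFinSupp g)
    (hy : HasFinSupp y)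
    (α β : ℝ) (hα : 0 < α)
    (hyp : conv (ddot g) f = fun n => (α : ℂ) * ddot h n)
    (hdelta : (fun n => conv (ddot g) g n - (α : ℂ) * conv (ddot h) h n)
      = fun n => ((α * β : ℝ) : ℂ) * (if n = 0 then 1 else 0)) :
    (∀ x : ℤ → ℂ, HasFinSupp x →
      Dcost g (conv f y) x - energy (conv f y)
        = α * β * energy x + α * (Dcost h y x - energy y)) ∧
    (∀ (X : Finset (ℤ → ℂ)) (c : ℝ),
      (∀ x' ∈ X, HasFinSupp x') → (∀ x' ∈ X, energy x' = c) →
      ∀ x₀ ∈ X,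
        ((∀ x' ∈ X, Dcost g (conv f y) x₀ ≤ Dcost g (conv f y) x') ↔
         (∀ x' ∈ X, Dcost h y x₀ ≤ Dcost h y x'))) := by
  have hz : HasFinSupp (conv f y) := conv_fin hf hy
  have key : ∀ x : ℤ → ℂ, HasFinSupp x →
      Dcost g (conv f y) x - energy (conv f y)
        = α * β * energy x + α * (Dcost h y x - energy y) := by
    intro x hx
    have hgx : HasFinSupp (conv g x) := conv_fin hg hx
    have hhx : HasFinSupp (conv h x) := conv_fin hh hx
    have e1 : Dcost g (conv f y) x
        = energy (conv f y) - 2 * (∑' n, conj (conv f y n) * conv g x n).re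
          + energy (conv g x) := by
      unfold Dcost energy
      exact dexp _ _ hz hgx
    have e2 : Dcost h y x
        = energy y - 2 * (∑' n, conj (y n) * conv h x n).re + energy (conv h x) := by
      unfold Dcost energy
      exact dexp _ _ hy hhx
    have hconv1 : conv (ddot g) (conv f y) = fun n => (α:ℂ) * conv (ddot h) y n := by
      rw [← conv_assoc (ddot g) f y (ddot_fin hg) hf hy, hyp]
      funext n
      exact conv_smul_left _ _ _ n
    have hc1 : (∑' n, conj (conv f y n) * conv g x n)
        = (α:ℂ) * ∑' n, conj (y n) * conv h x n := by
      rw [adj g (conv f y) x hg hz hx]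
      simp only [hconv1]
      have hterm : ∀ n : ℤ, conj ((α:ℂ) * conv (ddot h) y n) * x n
          = (α:ℂ) * (conj (conv (ddot h) y n) * x n) := by
        intro n
        rw [map_mul, Complex.conj_ofReal]; ring
      simp only [hterm]
      rw [tsum_mul_left]
      congr 1
      exact (adj h y x hh hy hx).symm
    have hgg : conv (ddot g) g
        = fun n => (α:ℂ) * conv (ddot h) h n + ((α*β : ℝ):ℂ) * (if n = 0 then 1 else 0) := by
      funext n
      have hd := congrFun hdelta n
      linear_combination hd
    have hA : HasFinSupp (fun k => (α:ℂ) * conv (ddot h) h k) := by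
      refine (conv_fin (ddot_fin hh) hh).subset ?_
      intro k hk
      simp only [Function.mem_support] at hk ⊢
      exact right_ne_zero_of_mul hk
    have hB : HasFinSupp (fun k : ℤ => ((α*β : ℝ):ℂ) * (if k = 0 then 1 else 0)) := by
      refine (Set.finite_singleton (0:ℤ)).subset ?_
      intro k hk
      simp only [Function.mem_support] at hk
      simp only [Set.mem_singleton_iff]
      by_contra hk0
      simp [hk0] at hk
    have hconv2 : conv (ddot g) (conv g x) = fun n =>
        (α:ℂ) * conv (conv (ddot h) h) x n + ((α*β : ℝ):ℂ) * x n := by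
      rw [← conv_assoc (ddot g) g x (ddot_fin hg) hg hx, hgg]
      funext n
      rw [conv_add_left _ _ _ hA hB n, conv_smul_left, conv_smul_left]
      congr 2
      exact conv_delta x n
    have hc2c : (∑' n, conj (conv g x n) * conv g x n)
        = (α:ℂ) * (∑' n, conj (conv h x n) * conv h x n)
          + ((α*β:ℝ):ℂ) * ∑' n, conj (x n) * x n := by
      rw [adj g (conv g x) x hg hgx hx]
      simp only [hconv2]
      have hterm : ∀ n : ℤ,
          conj ((α:ℂ) * conv (conv (ddot h) h) x n + ((α*β:ℝ):ℂ) * x n) * x n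
          = (α:ℂ) * (conj (conv (conv (ddot h) h) x n) * x n)
            + ((α*β:ℝ):ℂ) * (conj (x n) * x n) := by
        intro n
        rw [map_add, map_mul, map_mul, Complex.conj_ofReal, Complex.conj_ofReal]; ring
      simp only [hterm]
      rw [Summable.tsum_add (Summable.mul_left _ (hfs_mul_right hx))
            (Summable.mul_left _ (hfs_mul_right hx)), tsum_mul_left, tsum_mul_left]
      congr 2
      rw [conv_assoc (ddot h) h x (ddot_fin hh) hh hx]
      exact (adj h (conv h x) x hh hhx hx).symm
    have hc2 : energy (conv g x) = α * energy (conv h x) + α * β * energy x := by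
      rw [energy_eq_re _ hgx, hc2c, energy_eq_re _ hhx, energy_eq_re _ hx]
      simp [Complex.add_re, Complex.mul_re]
    have hre1 : (∑' n, conj (conv f y n) * conv g x n).re
        = α * (∑' n, conj (y n) * conv h x n).re := by
      rw [hc1]
      simp [Complex.mul_re]
    rw [e1, e2, hc2, hre1]
    ring
  refine ⟨key, ?_⟩
  intro X c hXfin hXen x₀ hx₀
  have keyX : ∀ x' ∈ X, Dcost g (conv f y) x'
      = energy (conv f y) + α * β * c + α * (Dcost h y x' - energy y) := by
    intro x' hx'
    have hk := key x' (hXfin x' hx')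
    rw [hXen x' hx'] at hk
    linarith
  constructor
  · intro H x' hx'
    have h1 := keyX x₀ hx₀
    have h2 := keyX x' hx'
    have h3 := H x' hx'
    by_contra hcon
    push_neg at hcon
    nlinarith
  · intro H x' hx'
    have h1 := keyX x₀ hx₀
    have h2 := keyX x' hx'
    have h3 := H x' hx'
    nlinarith
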